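/- Let (σ,δ) be a left skew derivation of a ring A with δ locally nilpotent. Then Σ = {1, X, X^2, ...} is a left denominator set of A[X;σ,δ]: for every f ∈ A[X;σ,δ] there exist n ∈ ℕ and g ∈ A[X;σ,δ] with X^n f = g X, and Σ is left reversible. -/

import Mathlib

/-- Let `(σ, δ)` be a left skew derivation of a ring `A` with `δ` locally
nilpotent.  Then `Σ = {1, X, X², …}` is a left denominator set of `A[X;σ,δ]`
(modeled as a ring `R` with `ι : A →+* R`, `X : R`, the relation
`X·a = σ(a)·X + δ(a)` and `{X^i}` a left `A`-basis): for every
`f ∈ A[X;σ,δ]` there exist `n ∈ ℕ` and `g` with `X^n·f = g·X`, and `Σ` is left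
reversible. -/
theorem stmt4 {A R : Type*} [Ring A] [Ring R]
    (σ : A →+* A) (δ : A →+ A)
    (hleib : ∀ a b : A, δ (a * b) = σ a * δ b + δ a * b)
    (ι : A →+* R) (X : R)
    (hcomm : ∀ a : A, X * ι a = ι (σ a) * X + ι (δ a))
    (hbasis : ∀ f : R, ∃! c : ℕ →₀ A, f = c.sum fun i a => ι a * X ^ i)
    (hln : ∀ a : A, ∃ k : ℕ, (⇑δ)^[k] a = 0) :
    (∀ f : R, ∃ (n : ℕ) (g : R), X ^ n * f = g * X) ∧
    (∀ (f : R) (n : ℕ), f * X ^ n = 0 → ∃ k : ℕ, X ^ k * f = 0) := by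
  -- Key commutation lemma
  have key : ∀ (k : ℕ) (a : A), ∃ g : R, X ^ k * ι a = g * X + ι ((⇑δ)^[k] a) := by
    intro k
    induction k with
    | zero => intro a; exact ⟨0, by simp⟩
    | succ k ih =>
      intro a
      obtain ⟨g, hg⟩ := ih a
      refine ⟨X * g + ι (σ ((⇑δ)^[k] a)), ?_⟩
      rw [pow_succ', mul_assoc, hg, Function.iterate_succ_apply', mul_add,
        ← mul_assoc, hcomm]
      rw [add_mul, add_assoc]
  constructor
  · -- Ore condition
    have hsingle : ∀ (i : ℕ) (a : A), ∃ n g, X ^ n * (ι a * X ^ i) = g * X := by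
      intro i a
      obtain ⟨k, hk⟩ := hln a
      obtain ⟨g, hg⟩ := key k a
      refine ⟨k, g * X ^ i, ?_⟩
      rw [← mul_assoc, hg, hk, map_zero, add_zero, mul_assoc, mul_assoc,
        ← pow_succ', pow_succ]
    intro f
    obtain ⟨c, hc, -⟩ := hbasis f
    subst hc
    induction c using Finsupp.induction with
    | zero => exact ⟨0, 0, by simp⟩
    | single_add i a c hi ha ih =>
      obtain ⟨n1, g1, h1⟩ := ih
      obtain ⟨n2, g2, h2⟩ := hsingle i a
      have hsum : (Finsupp.single i a + c).sum (fun i a => ι a * X ^ i)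
          = ι a * X ^ i + c.sum (fun i a => ι a * X ^ i) := by
        rw [Finsupp.sum_add_index' (by intro j; simp) (by intro j x y; rw [map_add, add_mul]),
          Finsupp.sum_single_index (by simp)]
      refine ⟨n1 + n2, X ^ n1 * g2 + X ^ n2 * g1, ?_⟩
      rw [hsum, mul_add]
      have e1 : X ^ (n1 + n2) * (ι a * X ^ i) = (X ^ n1 * g2) * X := by
        rw [pow_add, mul_assoc, h2, ← mul_assoc]
      have e2 : X ^ (n1 + n2) * c.sum (fun i a => ι a * X ^ i) = (X ^ n2 * g1) * X := by
        rw [add_comm n1 n2, pow_add, mul_assoc, h1, ← mul_assoc]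
      rw [e1, e2, add_mul]
  · -- left reversibility: in fact X is right regular
    have huniq : ∀ d : ℕ →₀ A, (0 : R) = d.sum (fun i a => ι a * X ^ i) → d = 0 := by
      intro d hd
      obtain ⟨c, hc, hu⟩ := hbasis 0
      rw [hu d hd, ← hu 0 (by simp)]
    have hX : ∀ f : R, f * X = 0 → f = 0 := by
      intro f hf
      obtain ⟨c, hc, -⟩ := hbasis f
      have hmap : f * X = (c.mapDomain (· + 1)).sum (fun i a => ι a * X ^ i) := by
        rw [Finsupp.sum_mapDomain_index (by intro j; simp)
          (by intro j x y; rw [map_add, add_mul]), hc, Finsupp.sum_mul]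
        refine Finsupp.sum_congr fun i _ => ?_
        rw [mul_assoc, ← pow_succ]
      have : c.mapDomain (· + 1) = 0 := huniq _ (hf ▸ hmap)
      have hc0 : c = 0 := Finsupp.mapDomain_injective (add_left_injective 1) (by simpa using this)
      rw [hc, hc0, Finsupp.sum_zero_index]
    intro f n hfn
    refine ⟨0, ?_⟩
    rw [pow_zero, one_mul]
    induction n with
    | zero => simpa using hfn
    | succ n ih =>
      rw [pow_succ, ← mul_assoc] at hfn
      exact ih (hX _ hfn)
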